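/- Let (R, m, k) be an F-finite Noetherian local ring of prime characteristic p > 0 and let θ : F^e_* R → R be a surjective R-linear map for some e ≥ 1. Then the collection 𝒬 of θ-compatible prime ideals of R forms an intersection compatible system: the set of all finite intersections of θ-compatible primes is closed under finite sums; in particular, any finite sum of finite intersections of θ-compatible prime ideals is a radical ideal equal to a finite intersection of θ-compatible prime ideals. -/

import Mathlib

open IsLocalRing TensorProduct

universe u

section Defs

variable (R : Type u) [CommRing R]

/-- The embedding dimension of a Noetherian local ring: `dim_k (m/m²)`. -/
noncomputable def embDim [IsLocalRing R] : ℕ :=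
  Module.finrank (ResidueField R) (CotangentSpace R)

/-- A Noetherian local ring is regular if its embedding dimension equals its Krull dimension. -/
def IsRegularLocal [IsLocalRing R] : Prop :=
  IsNoetherianRing R ∧ (embDim R : WithBot ℕ∞) = ringKrullDim R

/-- A (not necessarily local) commutative ring is regular if it is Noetherian and all of its
localizations at primes are regular local rings. -/
def IsRegularRing' : Prop :=
  IsNoetherianRing R ∧ ∀ (p : Ideal R) (_ : p.IsPrime), IsRegularLocal (Localization.AtPrime p)

/-- An algebra `A` over a field `k` is geometrically regular if `L ⊗ₖ A` is a regular ring for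
every finite field extension `L` of `k`. -/
def IsGeomRegularAlgebra (k : Type u) (A : Type u) [Field k] [CommRing A] [Algebra k A] : Prop :=
  ∀ (L : Type u) [Field L] [Algebra k L], Module.Finite k L → IsRegularRing' (L ⊗[k] A)

/-- A chain of primes is saturated if each step is a covering relation. -/
def IsSaturatedChain {α : Type u} [Preorder α] (c : LTSeries α) : Prop :=
  ∀ i : Fin c.length, c.toFun i.castSucc ⋖ c.toFun i.succ

/-- A ring is catenary if any two saturated chains of primes with the same endpoints have the
same length. -/
def IsCatenary : Prop :=
  ∀ c₁ c₂ : LTSeries (PrimeSpectrum R), c₁.head = c₂.head → c₁.last = c₂.last →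
    IsSaturatedChain c₁ → IsSaturatedChain c₂ → c₁.length = c₂.length

/-- A ring is universally catenary if every finite type algebra over it is catenary. -/
def IsUniversallyCatenary : Prop :=
  ∀ (S : Type u) [CommRing S] [Algebra R S], Algebra.FiniteType R S → IsCatenary S

/-- The residue field of a ring at a prime ideal. -/
abbrev residueFieldAt (q : Ideal R) [q.IsPrime] : Type u :=
  ResidueField (Localization.AtPrime q)

/-- A ring is a G-ring if, for every prime `p`, the formal fibers of `R_p` (the fibers of the
map from `R_p` to its `maximal-adic` completion, over the primes `q ⊆ p` of `R`) are
geometrically regular over the residue fields `κ(q)`. -/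
def IsGRing : Prop :=
  ∀ (p : Ideal R) (_ : p.IsPrime) (q : Ideal R) (_ : q.IsPrime), q ≤ p →
    letI Rp := Localization.AtPrime p
    letI Rphat := AdicCompletion (maximalIdeal Rp) Rp
    letI iA : Algebra R Rphat :=
      ((algebraMap Rp Rphat).comp (algebraMap R Rp)).toAlgebra
    letI iB : Algebra R (residueFieldAt R q) :=
      ((algebraMap (Localization.AtPrime q) (residueFieldAt R q)).comp
        (algebraMap R (Localization.AtPrime q))).toAlgebra
    IsGeomRegularAlgebra (residueFieldAt R q)
      (@TensorProduct R _ (residueFieldAt R q) Rphat _ _ iB.toModule iA.toModule)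

/-- A ring is J-2 if the regular locus of every finite type algebra over it is open. -/
def IsJ2 : Prop :=
  ∀ (S : Type u) [CommRing S] [Algebra R S], Algebra.FiniteType R S →
    IsOpen {p : PrimeSpectrum S | IsRegularLocal (Localization.AtPrime p.asIdeal)}

/-- A ring is excellent if it is Noetherian, universally catenary, a G-ring, and J-2. -/
def IsExcellentRing : Prop :=
  IsNoetherianRing R ∧ IsUniversallyCatenary R ∧ IsGRing R ∧ IsJ2 R

/-- A proper ideal of a local ring is equidimensional if all of its minimal primes have the same
coheight. -/
def IsEquidimensionalIdeal (Q : Ideal R) : Prop :=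
  ∀ P ∈ Q.minimalPrimes, ringKrullDim (R ⧸ P) = ringKrullDim (R ⧸ Q)

/-- A set of ideals of a local ring is a pseudo-prime system if each of its members is a proper
radical equidimensional ideal, and whenever some minimal prime of one member is contained in a
minimal prime of another, the first member is contained in the second. -/
def IsPseudoPrimeSystem (𝒬 : Set (Ideal R)) : Prop :=
  (∀ Q ∈ 𝒬, Q ≠ ⊤ ∧ Q.IsRadical ∧ IsEquidimensionalIdeal R Q) ∧
    ∀ Q₁ ∈ 𝒬, ∀ Q₂ ∈ 𝒬,
      (∃ P₁ ∈ Q₁.minimalPrimes, ∃ P₂ ∈ Q₂.minimalPrimes, P₁ ≤ P₂) → Q₁ ≤ Q₂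

/-- `e(R, 𝒬, d)`: the number of ideals in `𝒬` of coheight `d`. -/
noncomputable def sysCount (𝒬 : Set (Ideal R)) (d : ℕ) : ℕ :=
  {Q ∈ 𝒬 | ringKrullDim (R ⧸ Q) = (d : WithBot ℕ∞)}.ncard

/-- The set of all intersections of finite nonempty subcollections of `𝒬`. -/
def finiteIntersections (𝒬 : Set (Ideal R)) : Set (Ideal R) :=
  {I | ∃ α : Finset (Ideal R), α.Nonempty ∧ ↑α ⊆ 𝒬 ∧ I = α.inf id}

/-- A pseudo-prime system `𝒬` is intersection compatible if the set of intersections of finite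
nonempty subcollections of `𝒬` is closed under (finite) sums. -/
def IsIntersectionCompatible (𝒬 : Set (Ideal R)) : Prop :=
  ∀ I ∈ finiteIntersections R 𝒬, ∀ J ∈ finiteIntersections R 𝒬,
    I + J ∈ finiteIntersections R 𝒬

end Defs

section Frobenius

/-- An additive map `θ : R → R` is `R`-linear as a map `F^e_* R → R` if
`θ(r^{p^e} x) = r θ(x)` for all `r, x`. -/
def IsPeLinearMap (R : Type u) [CommRing R] (p e : ℕ) (θ : R →+ R) : Prop :=
  ∀ r x : R, θ (r ^ p ^ e * x) = r * θ x

/-- A ring `R` of characteristic `p` is `F`-finite if `F^1_* R` is a finitely generated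
`R`-module, i.e. there exist finitely many elements `a ∈ s` such that every `x ∈ R` is of the
form `x = Σ_{a ∈ s} (c a)^p * a`. -/
def IsFFinite (R : Type u) [CommRing R] (p : ℕ) : Prop :=
  ∃ s : Finset R, ∀ x : R, ∃ c : R → R, x = ∑ a ∈ s, c a ^ p * a

end Frobenius


section Aux

variable {R : Type u} [CommRing R]

/-- Compatible ideals w.r.t. a surjective `p^e`-linear map are radical. -/
lemma compat_isRadical_aux (p e : ℕ) (hp : 2 ≤ p) (he : 1 ≤ e) (θ : R →+ R)
    (hθ : ∀ r x : R, θ (r ^ p ^ e * x) = r * θ x) (hsurj : Function.Surjective θ)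
    (Q : Ideal R) (hQ : ∀ x ∈ Q, θ x ∈ Q) : Q.IsRadical := by
  have hk : 1 < p ^ e := by
    calc 1 < 2 := one_lt_two
    _ ≤ p := hp
    _ ≤ p ^ e := Nat.le_self_pow (by omega) p
  rw [Ideal.isRadical_iff_pow_one_lt (p ^ e) hk]
  intro x hx
  obtain ⟨y, hy⟩ := hsurj 1
  have h := hQ (x ^ p ^ e * y) (Ideal.mul_mem_right _ _ hx)
  rwa [hθ x y, hy, mul_one] at h

/-- Minimal primes over a compatible ideal are compatible. -/
lemma minimalPrime_compat_aux [IsNoetherianRing R] (p e : ℕ) (hpe : p ^ e ≠ 0) (θ : R →+ R)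
    (hθ : ∀ r x : R, θ (r ^ p ^ e * x) = r * θ x)
    (Q : Ideal R) (hQrad : Q.IsRadical) (hQ : ∀ x ∈ Q, θ x ∈ Q)
    (P : Ideal R) (hP : P ∈ Q.minimalPrimes) : ∀ x ∈ P, θ x ∈ P := by
  have hPprime : P.IsPrime := hP.1.1
  have hQP : Q ≤ P := hP.1.2
  have hfin : Q.minimalPrimes.Finite := by
    rw [Ideal.minimalPrimes_eq_comap]
    exact ((minimalPrimes.finite_of_isNoetherianRing (R ⧸ Q)).image _)
  have hS : (Q.minimalPrimes \ {P}).Finite := hfin.diff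
  have hpick : ∀ P' ∈ Q.minimalPrimes \ {P}, ∃ a, a ∈ P' ∧ a ∉ P := by
    rintro P' ⟨hP', hne⟩
    by_contra hcon
    push_neg at hcon
    have hle : P' ≤ P := fun a ha => by
      by_contra h; exact h (hcon a ha)
    have : P ≤ P' := hP.2 ⟨hP'.1.1, hP'.1.2⟩ hle
    exact hne (le_antisymm hle this)
  classical
  choose! c hc1 hc2 using hpick
  set T : Finset (Ideal R) := hS.toFinset with hT
  set a : R := ∏ P' ∈ T, c P' with ha
  have haP : a ∉ P := by
    intro hmem
    rw [ha, Ideal.IsPrime.prod_mem_iff] at hmem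
    obtain ⟨P', hP', hcP'⟩ := hmem
    exact hc2 P' (hS.mem_toFinset.mp hP') hcP'
  have haP' : ∀ P' ∈ Q.minimalPrimes, P' ≠ P → a ∈ P' := by
    intro P' hP' hne
    have hmem : P' ∈ T := hS.mem_toFinset.mpr ⟨hP', hne⟩
    obtain ⟨r, hr⟩ := Finset.dvd_prod_of_mem c hmem
    rw [ha, hr]
    exact Ideal.mul_mem_right _ _ (hc1 P' ⟨hP', hne⟩)
  intro x hx
  have hax : a ^ p ^ e * x ∈ Q := by
    have : a ^ p ^ e * x ∈ sInf Q.minimalPrimes := by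
      rw [Submodule.mem_sInf]
      intro P' hP'
      by_cases h : P' = P
      · subst h; exact Ideal.mul_mem_left _ _ hx
      · exact Ideal.mul_mem_right _ _
          (Ideal.pow_mem_of_mem _ (haP' P' hP' h) _ (Nat.pos_of_ne_zero hpe))
    rwa [Ideal.sInf_minimalPrimes, hQrad.radical] at this
  have h := hQ _ hax
  rw [hθ a x] at h
  exact (hPprime.mem_or_mem (hQP h)).resolve_left haP

end Aux

/-- For a surjective `R`-linear map `θ : F^e_* R → R` on an `F`-finite Noetherian local ring of
characteristic `p > 0`, the `θ`-compatible prime ideals form an intersection compatible system;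
in particular any finite sum of finite intersections of `θ`-compatible primes is a radical
ideal which is again a finite intersection of `θ`-compatible primes. -/
theorem compatiblePrimes_isIntersectionCompatible (R : Type u) [CommRing R]
    [IsNoetherianRing R] [IsLocalRing R] (p : ℕ) [Fact p.Prime] [CharP R p]
    (hFf : IsFFinite R p) (e : ℕ) (he : 1 ≤ e) (θ : R →+ R) (hθ : IsPeLinearMap R p e θ)
    (hsurj : Function.Surjective θ) :
    IsIntersectionCompatible R {Q : Ideal R | Q.IsPrime ∧ ∀ x ∈ Q, θ x ∈ Q} ∧
    ∀ I ∈ finiteIntersections R {Q : Ideal R | Q.IsPrime ∧ ∀ x ∈ Q, θ x ∈ Q},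
      ∀ J ∈ finiteIntersections R {Q : Ideal R | Q.IsPrime ∧ ∀ x ∈ Q, θ x ∈ Q},
        (I + J).IsRadical ∧
          I + J ∈ finiteIntersections R {Q : Ideal R | Q.IsPrime ∧ ∀ x ∈ Q, θ x ∈ Q} := by
    classical
  have hp2 : 2 ≤ p := (Fact.out : p.Prime).two_le
  have hcompat : ∀ I ∈ finiteIntersections R {Q : Ideal R | Q.IsPrime ∧ ∀ x ∈ Q, θ x ∈ Q},
      (∀ x ∈ I, θ x ∈ I) ∧ I ≠ ⊤ := by
    rintro I ⟨α, ⟨Q₀, hQ₀⟩, hα, rfl⟩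
    constructor
    · intro x hx
      rw [Finset.inf_id_eq_sInf, Submodule.mem_sInf] at hx ⊢
      intro Q hQ
      exact (hα hQ).2 x (hx Q hQ)
    · intro htop
      have h1 : α.inf id ≤ Q₀ := Finset.inf_le hQ₀
      rw [htop] at h1
      exact (hα hQ₀).1.ne_top (top_le_iff.mp h1)
  have key : ∀ I ∈ finiteIntersections R {Q : Ideal R | Q.IsPrime ∧ ∀ x ∈ Q, θ x ∈ Q},
      ∀ J ∈ finiteIntersections R {Q : Ideal R | Q.IsPrime ∧ ∀ x ∈ Q, θ x ∈ Q},
        (I + J).IsRadical ∧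
          I + J ∈ finiteIntersections R {Q : Ideal R | Q.IsPrime ∧ ∀ x ∈ Q, θ x ∈ Q} := by
    rintro I hI J hJ
    obtain ⟨hIc, hIt⟩ := hcompat I hI
    obtain ⟨hJc, hJt⟩ := hcompat J hJ
    set K := I + J with hK
    have hKc : ∀ x ∈ K, θ x ∈ K := by
      intro x hx
      rw [hK, Submodule.add_eq_sup, Submodule.mem_sup] at hx ⊢
      obtain ⟨a, ha, b, hb, rfl⟩ := hx
      exact ⟨θ a, hIc a ha, θ b, hJc b hb, (map_add θ a b).symm⟩
    have hKrad : K.IsRadical := compat_isRadical_aux p e hp2 he θ hθ hsurj K hKc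
    have hKt : K ≠ ⊤ := by
      intro htop
      have : K ≤ IsLocalRing.maximalIdeal R := by
        rw [hK, Submodule.add_eq_sup]
        exact sup_le (IsLocalRing.le_maximalIdeal hIt) (IsLocalRing.le_maximalIdeal hJt)
      rw [htop, top_le_iff] at this
      exact (IsLocalRing.maximalIdeal.isMaximal R).ne_top this.symm.symm
    refine ⟨hKrad, ?_⟩
    have hfin : K.minimalPrimes.Finite := by
      rw [Ideal.minimalPrimes_eq_comap]
      exact ((minimalPrimes.finite_of_isNoetherianRing (R ⧸ K)).image _)
    have hne : K.minimalPrimes.Nonempty := by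
      obtain ⟨P, hP, -⟩ := Ideal.exists_minimalPrimes_le
        (J := IsLocalRing.maximalIdeal R) (IsLocalRing.le_maximalIdeal hKt)
      exact ⟨P, hP⟩
    refine ⟨hfin.toFinset, ?_, ?_, ?_⟩
    · rwa [Set.Finite.toFinset_nonempty]
    · intro P hP
      rw [Finset.mem_coe, hfin.mem_toFinset] at hP
      exact ⟨hP.1.1,
        minimalPrime_compat_aux p e (pow_ne_zero e (by omega)) θ hθ K hKrad hKc P hP⟩
    · rw [Finset.inf_id_eq_sInf, Set.Finite.coe_toFinset, Ideal.sInf_minimalPrimes,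
        hKrad.radical]
  exact ⟨fun I hI J hJ => (key I hI J hJ).2, key⟩
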